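/- Let U and M be finite sets with U_f ⊆ U for f ∈ M. Given F ⊆ M with a forest representative system, call a set W ⊆ U F-closed if |{f ∈ F : U_f ⊆ W}| = |W| - 1. Then the union of two F-closed sets with nonempty intersection is F-closed, every singleton is F-closed, and hence the maximal F-closed sets form a partition of U. -/

import Mathlib

open Finset
open scoped Classical

/-- `(e f)_{f ∈ F}` is a forest representative system for `(Uf f)_{f ∈ F}`:
pairwise distinct 2-element subsets `e f ⊆ Uf f` whose union is a forest. -/
def IsFRS {U M : Type} [DecidableEq U] (Uf : M → Finset U) (F : Finset M)
    (e : M → Sym2 U) : Prop :=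
  (∀ f ∈ F, ¬ (e f).IsDiag ∧ ∀ x ∈ e f, x ∈ Uf f) ∧
  Set.InjOn e ↑F ∧
  (SimpleGraph.fromEdgeSet {s | ∃ f ∈ F, e f = s}).IsAcyclic

/-- `W` is `F`-closed: the number of `f ∈ F` with `Uf f ⊆ W` equals `|W| - 1`. -/
def FClosed {U M : Type} [DecidableEq U] [DecidableEq M] (Uf : M → Finset U)
    (F : Finset M) (W : Finset U) : Prop :=
  (F.filter fun f => Uf f ⊆ W).card + 1 = W.card


lemma forest_count {U : Type} [DecidableEq U] (G : SimpleGraph U) (hG : G.IsAcyclic) :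
    ∀ (n : ℕ) (S : Finset U), S.card = n → S.Nonempty → ∀ (E : Finset (Sym2 U)),
    (∀ s ∈ E, s ∈ G.edgeSet ∧ ∀ x ∈ s, x ∈ S) → E.card + 1 ≤ S.card := by
  intro n
  induction n using Nat.strong_induction_on with
  | _ n ih =>
  intro S hSn hS E hE
  rcases eq_or_ne E ∅ with rfl | hEne
  · simpa using Finset.card_pos.mpr hS
  obtain ⟨s, hsE⟩ := Finset.nonempty_iff_ne_empty.mpr hEne
  induction s using Sym2.ind with
  | _ u v =>
  obtain ⟨hse, hsS⟩ := hE _ hsE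
  have huv : G.Adj u v := (SimpleGraph.mem_edgeSet G).mp hse
  have hu : u ∈ S := hsS u (by simp)
  have hv : v ∈ S := hsS v (by simp)
  have hb : G.IsBridge s(u, v) := (SimpleGraph.isAcyclic_iff_forall_adj_isBridge.mp hG) huv
  set G' : SimpleGraph U := G \ SimpleGraph.fromEdgeSet {s(u, v)} with hG'
  have hnr : ¬ G'.Reachable u v := SimpleGraph.isBridge_iff.mp hb
  set Su : Finset U := S.filter (fun x => G'.Reachable u x) with hSu
  set Sv : Finset U := S \ Su with hSv
  have huSu : u ∈ Su := by simp [hSu, hu, SimpleGraph.Reachable.refl]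
  have hvSv : v ∈ Sv := by simp [hSv, hSu, hv, hnr]
  have hSuS : Su ⊆ S := Finset.filter_subset _ _
  have hSvS : Sv ⊆ S := Finset.sdiff_subset
  have hcards : Sv.card + Su.card = S.card := Finset.card_sdiff_add_card_eq_card hSuS
  have hSult : Su.card < S.card := by
    apply Finset.card_lt_card
    exact Finset.ssubset_iff_of_subset hSuS |>.mpr ⟨v, hv, by simp [hSv] at hvSv; exact hvSv.2⟩
  have hSvlt : Sv.card < S.card := by
    apply Finset.card_lt_card
    refine Finset.ssubset_iff_of_subset hSvS |>.mpr ⟨u, hu, ?_⟩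
    simp [hSv, huSu]
  set E' : Finset (Sym2 U) := E.erase s(u, v) with hE'
  set Eu : Finset (Sym2 U) := E'.filter (fun t => ∀ x ∈ t, x ∈ Su) with hEu
  set Ev : Finset (Sym2 U) := E'.filter (fun t => ∀ x ∈ t, x ∈ Sv) with hEv
  have hsplit : E' ⊆ Eu ∪ Ev := by
    intro t ht
    induction t using Sym2.ind with
    | _ a b =>
    have htne : s(a, b) ≠ s(u, v) := Finset.ne_of_mem_erase ht
    have htE : s(a, b) ∈ E := Finset.mem_of_mem_erase ht
    obtain ⟨hte, htS⟩ := hE _ htE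
    have hab : G.Adj a b := (SimpleGraph.mem_edgeSet G).mp hte
    have hab' : G'.Adj a b := by
      rw [hG']
      simp only [SimpleGraph.sdiff_adj, SimpleGraph.fromEdgeSet_adj]
      exact ⟨hab, fun hc => htne (by simpa using hc.1)⟩
    have ha : a ∈ S := htS a (by simp)
    have hbS : b ∈ S := htS b (by simp)
    by_cases hra : G'.Reachable u a
    · have hrb : G'.Reachable u b := hra.trans hab'.reachable
      apply Finset.mem_union_left
      simp only [hEu, Finset.mem_filter]
      refine ⟨ht, ?_⟩
      intro x hx
      rw [Sym2.mem_iff] at hx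
      rcases hx with rfl | rfl <;> simp [hSu, ha, hbS, hra, hrb]
    · have hrb : ¬ G'.Reachable u b := fun hrb => hra (hrb.trans hab'.symm.reachable)
      apply Finset.mem_union_right
      simp only [hEv, Finset.mem_filter]
      refine ⟨ht, ?_⟩
      intro x hx
      rw [Sym2.mem_iff] at hx
      rcases hx with rfl | rfl <;> simp [hSv, hSu, ha, hbS, hra, hrb]
  have hihu : Eu.card + 1 ≤ Su.card := by
    refine ih Su.card (hSn ▸ hSult) Su rfl ⟨u, huSu⟩ Eu ?_
    intro t ht
    simp only [hEu, Finset.mem_filter] at ht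
    exact ⟨(hE t (Finset.mem_of_mem_erase ht.1)).1, ht.2⟩
  have hihv : Ev.card + 1 ≤ Sv.card := by
    refine ih Sv.card (hSn ▸ hSvlt) Sv rfl ⟨v, hvSv⟩ Ev ?_
    intro t ht
    simp only [hEv, Finset.mem_filter] at ht
    exact ⟨(hE t (Finset.mem_of_mem_erase ht.1)).1, ht.2⟩
  have hcE : E.card = E'.card + 1 := by
    rw [hE', Finset.card_erase_of_mem hsE]
    have := Finset.card_pos.mpr ⟨_, hsE⟩
    omega
  have hE'le : E'.card ≤ Eu.card + Ev.card :=
    le_trans (Finset.card_le_card hsplit) (Finset.card_union_le _ _)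
  omega

lemma count_le {U M : Type} [DecidableEq U] [DecidableEq M] (Uf : M → Finset U)
    (F : Finset M) (e : M → Sym2 U) (h : IsFRS Uf F e) (W : Finset U) (hW : W.Nonempty) :
    (F.filter fun f => Uf f ⊆ W).card + 1 ≤ W.card := by
  obtain ⟨h1, h2, h3⟩ := h
  set G : SimpleGraph U := SimpleGraph.fromEdgeSet {s | ∃ f ∈ F, e f = s} with hG
  set E : Finset (Sym2 U) := (F.filter fun f => Uf f ⊆ W).image e with hEdef
  have hcard : E.card = (F.filter fun f => Uf f ⊆ W).card := by
    apply Finset.card_image_of_injOn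
    intro a ha b hb hab
    exact h2 (by simpa using (Finset.mem_filter.mp ha).1)
      (by simpa using (Finset.mem_filter.mp hb).1) hab
  rw [← hcard]
  refine forest_count G h3 W.card W rfl hW E ?_
  intro s hs
  simp only [hEdef, Finset.mem_image, Finset.mem_filter] at hs
  obtain ⟨f, ⟨hfF, hfW⟩, rfl⟩ := hs
  constructor
  · rw [hG, SimpleGraph.edgeSet_fromEdgeSet]
    exact ⟨⟨f, hfF, rfl⟩, (h1 f hfF).1⟩
  · intro x hx
    exact hfW ((h1 f hfF).2 x hx)

lemma singleton_closed {U M : Type} [DecidableEq U] [DecidableEq M] (Uf : M → Finset U)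
    (F : Finset M) (e : M → Sym2 U) (h : IsFRS Uf F e) (x : U) : FClosed Uf F {x} := by
  have : (F.filter fun f => Uf f ⊆ ({x} : Finset U)) = ∅ := by
    rw [Finset.eq_empty_iff_forall_notMem]
    intro f hf
    rw [Finset.mem_filter] at hf
    obtain ⟨hfF, hfsub⟩ := hf
    obtain ⟨hd, hsub⟩ := h.1 f hfF
    have key : ∀ y ∈ e f, y = x := fun y hy => Finset.mem_singleton.mp (hfsub (hsub y hy))
    apply hd
    refine Sym2.ind (f := fun s => (∀ y ∈ s, y = x) → s.IsDiag) ?_ (e f) key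
    intro a b hk
    have ha : a = x := hk a (by simp)
    have hb : b = x := hk b (by simp)
    rw [ha, hb]
    simp
  show (F.filter fun f => Uf f ⊆ ({x} : Finset U)).card + 1 = ({x} : Finset U).card
  rw [this]
  simp

lemma union_closed {U M : Type} [DecidableEq U] [DecidableEq M] (Uf : M → Finset U)
    (F : Finset M) (e : M → Sym2 U) (h : IsFRS Uf F e) (W1 W2 : Finset U)
    (h1 : FClosed Uf F W1) (h2 : FClosed Uf F W2) (hne : (W1 ∩ W2).Nonempty) :
    FClosed Uf F (W1 ∪ W2) := by
  set A := F.filter fun f => Uf f ⊆ W1 with hA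
  set B := F.filter fun f => Uf f ⊆ W2 with hB
  set C := F.filter fun f => Uf f ⊆ W1 ∩ W2 with hC
  set D := F.filter fun f => Uf f ⊆ W1 ∪ W2 with hD
  have hAB : A ∩ B = C := by
    ext f
    simp only [hA, hB, hC, Finset.mem_inter, Finset.mem_filter, Finset.subset_inter_iff]
    tauto
  have hABD : A ∪ B ⊆ D := by
    intro f hf
    simp only [hA, hB, hD, Finset.mem_union, Finset.mem_filter] at hf ⊢
    rcases hf with ⟨hfF, hsub⟩ | ⟨hfF, hsub⟩
    · exact ⟨hfF, hsub.trans Finset.subset_union_left⟩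
    · exact ⟨hfF, hsub.trans Finset.subset_union_right⟩
  have hCle : C.card + 1 ≤ (W1 ∩ W2).card := count_le Uf F e h _ hne
  have hWne : (W1 ∪ W2).Nonempty := hne.mono (Finset.inter_subset_left.trans Finset.subset_union_left)
  have hDle : D.card + 1 ≤ (W1 ∪ W2).card := count_le Uf F e h _ hWne
  have hsum : (W1 ∪ W2).card + (W1 ∩ W2).card = W1.card + W2.card :=
    Finset.card_union_add_card_inter _ _
  have hsumAB : (A ∪ B).card + (A ∩ B).card = A.card + B.card :=
    Finset.card_union_add_card_inter _ _
  have hle : (A ∪ B).card ≤ D.card := Finset.card_le_card hABD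
  have hCAB : (A ∩ B).card = C.card := by rw [hAB]
  have h1' : A.card + 1 = W1.card := h1
  have h2' : B.card + 1 = W2.card := h2
  show D.card + 1 = (W1 ∪ W2).card
  omega

theorem stmt_12 {U M : Type} [Fintype U] [Fintype M] [DecidableEq U] [DecidableEq M]
    (Uf : M → Finset U) (F : Finset M) (e : M → Sym2 U) (h : IsFRS Uf F e) :
    (∀ W1 W2 : Finset U, FClosed Uf F W1 → FClosed Uf F W2 →
      (W1 ∩ W2).Nonempty → FClosed Uf F (W1 ∪ W2)) ∧
    (∀ x : U, FClosed Uf F {x}) ∧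
    (∀ x : U, ∃! W : Finset U,
      (FClosed Uf F W ∧ ∀ W' : Finset U, FClosed Uf F W' → W ⊆ W' → W = W') ∧ x ∈ W) := by
  refine ⟨union_closed Uf F e h, singleton_closed Uf F e h, ?_⟩
  intro x
  set T : Finset (Finset U) :=
    (Finset.univ : Finset (Finset U)).filter (fun W => FClosed Uf F W ∧ x ∈ W) with hT
  have hTne : T.Nonempty := ⟨{x}, by simp [hT, singleton_closed Uf F e h x]⟩
  obtain ⟨W, hWT, hWmax⟩ := T.exists_max_image Finset.card hTne
  simp only [hT, Finset.mem_filter] at hWT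
  obtain ⟨-, hWcl, hxW⟩ := hWT
  have hmax : ∀ W' : Finset U, FClosed Uf F W' → W ⊆ W' → W = W' := by
    intro W' hW'cl hsub
    refine Finset.eq_of_subset_of_card_le hsub ?_
    exact hWmax W' (by simp [hT, hW'cl, hsub hxW])
  refine ⟨W, ⟨⟨hWcl, hmax⟩, hxW⟩, ?_⟩
  rintro W' ⟨⟨hW'cl, hmax'⟩, hxW'⟩
  have hint : (W' ∩ W).Nonempty := ⟨x, Finset.mem_inter.mpr ⟨hxW', hxW⟩⟩
  have hucl : FClosed Uf F (W' ∪ W) := union_closed Uf F e h W' W hW'cl hWcl hint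
  have e1 : W' = W' ∪ W := hmax' _ hucl Finset.subset_union_left
  have e2 : W = W' ∪ W := hmax _ hucl Finset.subset_union_right
  exact e1.trans e2.symm
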